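/- For every integer k ≥ 1, setting n = 2^k + 2 and p = 2^k + 1, the n×n matrix A = (C_p ⊕ C_1) + T(2, n, p, p), viewed over ℚ, has finite multiplicative order equal to 2^{k+1}; moreover, every m×m permutation matrix of multiplicative order 2^{k+1} satisfies m ≥ 2^{k+1}. -/

import Mathlib

open Polynomial

/-- `Ccyc k` is the `k × k` companion matrix of `x^k - 1`: the permutation matrix with `1`
in (1-based) positions `(i+1, i)` for `1 ≤ i ≤ k-1` and in position `(1, k)`. -/
def Ccyc (k : ℕ) : Matrix (Fin k) (Fin k) ℚ :=
  Matrix.of fun r c => if (r : ℕ) = ((c : ℕ) + 1) % k then 1 else 0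

/-- `Tblock n i1 j1 i2 j2` is the `n × n` matrix with entry `1` in (1-based) positions
`(i1, j1)` and `(i2, j2)`, entry `-1` in positions `(i1, j2)` and `(i2, j1)`, and `0`
elsewhere. -/
def Tblock (n i1 j1 i2 j2 : ℕ) : Matrix (Fin n) (Fin n) ℚ :=
  Matrix.of fun r c =>
    (if (r : ℕ) + 1 = i1 ∧ (c : ℕ) + 1 = j1 then (1 : ℚ) else 0)
      + (if (r : ℕ) + 1 = i2 ∧ (c : ℕ) + 1 = j2 then (1 : ℚ) else 0)
      - (if (r : ℕ) + 1 = i1 ∧ (c : ℕ) + 1 = j2 then (1 : ℚ) else 0)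
      - (if (r : ℕ) + 1 = i2 ∧ (c : ℕ) + 1 = j1 then (1 : ℚ) else 0)

/-- Matrix direct sum (block diagonal sum), realized on `Fin (p + q)`. -/
def dsum {p q : ℕ} (A : Matrix (Fin p) (Fin p) ℚ) (B : Matrix (Fin q) (Fin q) ℚ) :
    Matrix (Fin (p + q)) (Fin (p + q)) ℚ :=
  Matrix.reindex finSumFinEquiv finSumFinEquiv (Matrix.fromBlocks A 0 0 B)

/-- A square rational matrix has finite multiplicative order if `A ^ t = 1` for some `t > 0`. -/
def HasFinOrder {n : ℕ} (A : Matrix (Fin n) (Fin n) ℚ) : Prop :=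
  ∃ t : ℕ, 0 < t ∧ A ^ t = 1

/-- `OrderIs A t` : `t` is the least positive integer with `A ^ t = 1`. -/
def OrderIs {n : ℕ} (A : Matrix (Fin n) (Fin n) ℚ) (t : ℕ) : Prop :=
  IsLeast {s : ℕ | 0 < s ∧ A ^ s = 1} t

/-- Alternating sign matrix: entries in `{0, 1, -1}`, all partial row- and column-sums equal
`0` or `1`, and every full row and column sums to `1`. -/
def IsASM {n : ℕ} (A : Matrix (Fin n) (Fin n) ℚ) : Prop :=
  (∀ i j : Fin n, A i j = 0 ∨ A i j = 1 ∨ A i j = -1) ∧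
  (∀ i k : Fin n, (∑ j ∈ Finset.Iic k, A i j) = 0 ∨ (∑ j ∈ Finset.Iic k, A i j) = 1) ∧
  (∀ j k : Fin n, (∑ i ∈ Finset.Iic k, A i j) = 0 ∨ (∑ i ∈ Finset.Iic k, A i j) = 1) ∧
  (∀ i : Fin n, (∑ j, A i j) = 1) ∧
  (∀ j : Fin n, (∑ i, A i j) = 1)

/-- Permutation matrix. -/
def IsPermMat {n : ℕ} (A : Matrix (Fin n) (Fin n) ℚ) : Prop :=
  ∃ σ : Equiv.Perm (Fin n), ∀ i j, A i j = if σ i = j then 1 else 0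

/-- `A` is permutation similar to an alternating sign matrix:
`Pᵀ * A * P` is an ASM for some permutation matrix `P`. -/
def PermSimilarToASM {n : ℕ} (A : Matrix (Fin n) (Fin n) ℚ) : Prop :=
  ∃ P B : Matrix (Fin n) (Fin n) ℚ, IsPermMat P ∧ IsASM B ∧ B = P.transpose * A * P

/-- Similarity over `ℚ`. -/
def SimilarQ {n : ℕ} (A B : Matrix (Fin n) (Fin n) ℚ) : Prop :=
  ∃ S : Matrix (Fin n) (Fin n) ℚ, IsUnit S ∧ B = S⁻¹ * A * S

/-- A `T`-block: a matrix of the form `± T(i1, j1, i2, j2)` with `i1 ≠ i2`, `j1 ≠ j2`. -/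
def IsTBlock {n : ℕ} (M : Matrix (Fin n) (Fin n) ℚ) : Prop :=
  ∃ i1 j1 i2 j2 : ℕ, 1 ≤ i1 ∧ i1 ≤ n ∧ 1 ≤ j1 ∧ j1 ≤ n ∧ 1 ≤ i2 ∧ i2 ≤ n ∧ 1 ≤ j2 ∧ j2 ≤ n ∧
    i1 ≠ i2 ∧ j1 ≠ j2 ∧ (M = Tblock n i1 j1 i2 j2 ∨ M = -Tblock n i1 j1 i2 j2)


open Matrix
section Aux

/-- Explicit form of the matrix in the theorem, with `q = 2^k`, size `q+2`. -/
private def Amat (q : ℕ) : Matrix (Fin (q+2)) (Fin (q+2)) ℚ :=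
  Matrix.of fun i j =>
    if (j : ℕ) < q then (if (i : ℕ) = (j : ℕ) + 1 then 1 else 0)
    else if (j : ℕ) = q then
      (if (i : ℕ) = 0 then 1 else if (i : ℕ) = q then 1 else if (i : ℕ) = 1 then -1 else 0)
    else
      (if (i : ℕ) = q + 1 then 1 else if (i : ℕ) = 1 then 1 else if (i : ℕ) = q then -1 else 0)

private def dvec (q j : ℕ) : Fin (q+2) → ℚ :=
  fun i => (if (i : ℕ) = j + 1 then 1 else 0) - (if (i : ℕ) = j then 1 else 0)

private lemma dvec_eq_single (q j : ℕ) (h : j + 1 < q + 2) :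
    dvec q j = Pi.single (⟨j+1, h⟩ : Fin (q+2)) 1 - Pi.single ⟨j, by omega⟩ 1 := by
  funext i
  simp [dvec, Pi.single_apply, Fin.ext_iff, eq_comm]

private lemma mulVec_dvec (q j : ℕ) (M : Matrix (Fin (q+2)) (Fin (q+2)) ℚ) (h : j + 1 < q + 2) :
    M *ᵥ dvec q j = fun i => M i ⟨j+1, h⟩ - M i ⟨j, by omega⟩ := by
  rw [dvec_eq_single q j h, Matrix.mulVec_sub, Matrix.mulVec_single, Matrix.mulVec_single]
  funext i
  simp

private lemma Amat_step (q j : ℕ) (hj : j + 1 < q) :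
    Amat q *ᵥ dvec q j = dvec q (j+1) := by
  rw [mulVec_dvec q j _ (by omega)]
  funext i
  simp only [Amat, dvec, Matrix.of_apply, Fin.val_mk]
  rw [if_pos (show j + 1 < q by omega), if_pos (show j < q by omega)]

private lemma Amat_last (q : ℕ) (hq : 2 ≤ q) :
    Amat q *ᵥ dvec q (q-1) = -(dvec q 0) := by
  rw [mulVec_dvec q (q-1) _ (by omega)]
  funext i
  simp only [Amat, dvec, Matrix.of_apply, Fin.val_mk, Pi.neg_apply]
  rw [if_neg (show ¬ (q - 1 + 1 < q) by omega), if_pos (show q - 1 + 1 = q by omega),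
    if_pos (show q - 1 < q by omega)]
  have hi := i.isLt
  split_ifs <;> norm_num <;> omega

end Aux
private lemma Amat_pow_d0 (q : ℕ) (hq : 2 ≤ q) (t : ℕ) (ht : t < q) :
    (Amat q) ^ t *ᵥ dvec q 0 = dvec q t := by
  induction t with
  | zero => rw [pow_zero, Matrix.one_mulVec]
  | succ t ih =>
    rw [pow_succ', ← Matrix.mulVec_mulVec, ih (by omega), Amat_step q t (by omega)]

private lemma Amat_pow_q_d (q : ℕ) (hq : 2 ≤ q) (j : ℕ) (hj : j < q) :
    (Amat q) ^ q *ᵥ dvec q j = -(dvec q j) := by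
  have h0 : (Amat q) ^ q *ᵥ dvec q 0 = -(dvec q 0) := by
    rw [show (Amat q) ^ q = Amat q * (Amat q) ^ (q-1) by
      rw [← pow_succ', Nat.sub_add_cancel (by omega)]]
    rw [← Matrix.mulVec_mulVec, Amat_pow_d0 q hq (q-1) (by omega), Amat_last q hq]
  calc (Amat q) ^ q *ᵥ dvec q j = (Amat q) ^ q *ᵥ ((Amat q) ^ j *ᵥ dvec q 0) := by
        rw [Amat_pow_d0 q hq j hj]
    _ = ((Amat q) ^ q * (Amat q) ^ j) *ᵥ dvec q 0 := by rw [Matrix.mulVec_mulVec]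
    _ = ((Amat q) ^ j * (Amat q) ^ q) *ᵥ dvec q 0 := by rw [pow_mul_comm]
    _ = (Amat q) ^ j *ᵥ ((Amat q) ^ q *ᵥ dvec q 0) := by rw [Matrix.mulVec_mulVec]
    _ = -(dvec q j) := by
        rw [h0, Matrix.mulVec_neg, Amat_pow_d0 q hq j hj]

private lemma colzero17 {N : ℕ} (M : Matrix (Fin N) (Fin N) ℚ)
    (h : ∀ j, M *ᵥ Pi.single j 1 = 0) : M = 0 := by
  ext i j
  have := congrFun (h j) i
  simpa using this

private lemma Amat_key (q : ℕ) (hq : 2 ≤ q) :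
    ((Amat q) ^ q + 1) * (Amat q - 1) = 0 := by
  apply colzero17
  intro j
  rw [← Matrix.mulVec_mulVec]
  have hw : (Amat q - 1) *ᵥ Pi.single j 1 = fun i => (Amat q) i j - if i = j then 1 else 0 := by
    rw [Matrix.mulVec_single]
    funext i
    simp [Matrix.sub_apply, Matrix.one_apply]
  have hgen : ∀ v : Fin (q+2) → ℚ, (Amat q) ^ q *ᵥ v = -v → ((Amat q) ^ q + 1) *ᵥ v = 0 := by
    intro v hv
    rw [Matrix.add_mulVec, hv, Matrix.one_mulVec]
    simp
  rcases lt_trichotomy (j : ℕ) q with hj | hj | hj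
  · -- column j < q : w = dvec q j
    have : (Amat q - 1) *ᵥ Pi.single j 1 = dvec q j := by
      rw [hw]; funext i
      simp only [Amat, dvec, Matrix.of_apply, if_pos hj]
      congr 1
      simp [Fin.ext_iff]
    rw [this]
    exact hgen _ (Amat_pow_q_d q hq j hj)
  · -- column j = q : w = -(dvec q 0)
    have : (Amat q - 1) *ᵥ Pi.single j 1 = -(dvec q 0) := by
      rw [hw]; funext i
      simp only [Amat, dvec, Matrix.of_apply, if_neg (show ¬ (j:ℕ) < q by omega), if_pos hj,
        Pi.neg_apply, Fin.ext_iff]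
      have hi := i.isLt
      split_ifs <;> norm_num <;> omega
    rw [this]
    apply hgen
    rw [Matrix.mulVec_neg, Amat_pow_q_d q hq 0 (by omega)]
    try simp
  · -- column j = q+1 : w = dvec q 0 - ∑ t in range q, dvec q t
    have hj' : (j : ℕ) = q + 1 := by have := j.isLt; omega
    have : (Amat q - 1) *ᵥ Pi.single j 1 = dvec q 0 - ∑ t ∈ Finset.range q, dvec q t := by
      rw [hw]; funext i
      have hsum : (∑ t ∈ Finset.range q, dvec q t) i
          = (if (i:ℕ) = q then 1 else 0) - (if (i:ℕ) = 0 then 1 else 0) := by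
        rw [Finset.sum_apply]
        exact Finset.sum_range_sub (fun t => if (i:ℕ) = t then (1:ℚ) else 0) q
      simp only [Pi.sub_apply, hsum, dvec, Amat, Matrix.of_apply,
        if_neg (show ¬ (j:ℕ) < q by omega), if_neg (show ¬ (j:ℕ) = q by omega), Fin.ext_iff, hj']
      have hi := i.isLt
      split_ifs <;> norm_num <;> omega
    rw [this]
    apply hgen
    rw [Matrix.mulVec_sub, Amat_pow_q_d q hq 0 (by omega)]
    have : (Amat q) ^ q *ᵥ (∑ t ∈ Finset.range q, dvec q t)
        = -(∑ t ∈ Finset.range q, dvec q t) := by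
      rw [← Matrix.mulVecLin_apply, map_sum, ← Finset.sum_neg_distrib]
      refine Finset.sum_congr rfl (fun t ht => ?_)
      rw [Matrix.mulVecLin_apply, Amat_pow_q_d q hq t (Finset.mem_range.mp ht)]
    rw [this]
    abel

private lemma Amat_pow_eq_one (q : ℕ) (hq : 2 ≤ q) : (Amat q) ^ (2 * q) = 1 := by
  set A := Amat q
  have hcomm : (A ^ q + 1) * (∑ i ∈ Finset.range q, A ^ i)
      = (∑ i ∈ Finset.range q, A ^ i) * (A ^ q + 1) := by
    have h1 : Commute (A ^ q) (∑ i ∈ Finset.range q, A ^ i) :=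
      Commute.sum_right _ _ _ (fun i _ => (Commute.refl A).pow_pow q i)
    exact (h1.add_left (Commute.one_left _)).eq
  have h2 : A ^ (2 * q) - 1 = 0 := by
    calc A ^ (2 * q) - 1 = (A ^ q + 1) * (A ^ q - 1) := by
          rw [two_mul, pow_add]; noncomm_ring
      _ = (A ^ q + 1) * ((∑ i ∈ Finset.range q, A ^ i) * (A - 1)) := by rw [geom_sum_mul]
      _ = ((A ^ q + 1) * (∑ i ∈ Finset.range q, A ^ i)) * (A - 1) := by rw [mul_assoc]
      _ = (∑ i ∈ Finset.range q, A ^ i) * ((A ^ q + 1) * (A - 1)) := by rw [hcomm, mul_assoc]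
      _ = 0 := by rw [Amat_key q hq, mul_zero]
  have := sub_eq_zero.mp h2
  exact this

private lemma Amat_min (q : ℕ) (hq : 2 ≤ q) (s : ℕ) (hs : 0 < s) (h1 : (Amat q) ^ s = 1) :
    2 * q ≤ s := by
  set A := Amat q with hA
  have hneg : ∀ (a j : ℕ), j < q → (A ^ q) ^ a *ᵥ dvec q j = ((-1:ℚ) ^ a) • dvec q j := by
    intro a j hj
    induction a with
    | zero => simp [Matrix.one_mulVec]
    | succ a ih =>
      rw [pow_succ', ← Matrix.mulVec_mulVec, ih, Matrix.mulVec_smul,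
        Amat_pow_q_d q hq j hj]
      funext i
      simp [pow_succ]
  have hb : s % q < q := Nat.mod_lt _ (by omega)
  have hsplit : A ^ s = (A ^ q) ^ (s / q) * A ^ (s % q) := by
    rw [← pow_mul, ← pow_add]
    congr 1
    exact (Nat.div_add_mod s q).symm
  have heq : dvec q 0 = ((-1:ℚ) ^ (s / q)) • dvec q (s % q) := by
    calc dvec q 0 = A ^ s *ᵥ dvec q 0 := by rw [h1, Matrix.one_mulVec]
      _ = (A ^ q) ^ (s / q) *ᵥ (A ^ (s % q) *ᵥ dvec q 0) := by
          rw [hsplit, Matrix.mulVec_mulVec]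
      _ = (A ^ q) ^ (s / q) *ᵥ dvec q (s % q) := by rw [Amat_pow_d0 q hq _ hb]
      _ = ((-1:ℚ) ^ (s / q)) • dvec q (s % q) := hneg _ _ hb
  have h0 := congrFun heq (⟨0, by omega⟩ : Fin (q+2))
  simp only [dvec, Fin.val_mk, Pi.smul_apply, smul_eq_mul] at h0
  rw [if_pos trivial] at h0
  -- h0 : 0 - 1 = (-1)^(s/q) * ((if 0 = s % q + 1 then 1 else 0) - if 0 = s % q then 1 else 0)
  by_cases hb0 : s % q = 0
  · rw [hb0, if_neg (by omega), if_pos rfl] at h0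
    have hpow : ((-1:ℚ)) ^ (s / q) = 1 := by
      have : (0:ℚ) - 1 = -((-1:ℚ) ^ (s / q)) := by rw [h0]; ring
      have h2 : ((-1:ℚ) ^ (s / q)) = 1 := by linarith [this]
      exact h2
    have heven : Even (s / q) := by
      have hne : (-1:ℚ) ≠ 1 := by norm_num
      exact (neg_one_pow_eq_one_iff_even hne).mp hpow
    obtain ⟨c, hc⟩ := heven
    have hsq : s = q * (s / q) := by
      have := Nat.div_add_mod s q
      omega
    have hc1 : 1 ≤ c := by
      rcases Nat.eq_zero_or_pos c with h | h
      · exfalso; rw [h] at hc; rw [hc] at hsq; simp at hsq; omega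
      · exact h
    calc 2 * q = q * 2 := by ring
      _ ≤ q * (s / q) := Nat.mul_le_mul_left q (by omega)
      _ = s := hsq.symm
  · rw [if_neg (show ¬ (0 = s % q) by omega)] at h0
    norm_num at h0
private lemma perm_pow_entry {m : ℕ} (σ : Equiv.Perm (Fin m)) (P : Matrix (Fin m) (Fin m) ℚ)
    (hP : ∀ i j, P i j = if σ i = j then 1 else 0) (t : ℕ) :
    ∀ i j, (P ^ t) i j = if (σ ^ t) i = j then 1 else 0 := by
  induction t with
  | zero => intro i j; simp [Matrix.one_apply, Equiv.Perm.one_apply, eq_comm]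
  | succ t ih =>
    intro i j
    rw [pow_succ', Matrix.mul_apply]
    have : ∀ c, P i c * (P ^ t) c j = if σ i = c then (if (σ ^ t) c = j then (1:ℚ) else 0) else 0 := by
      intro c
      rw [hP, ih]
      split_ifs <;> norm_num
    simp only [this]
    rw [Finset.sum_ite_eq Finset.univ (σ i) (fun c => if (σ ^ t) c = j then (1:ℚ) else 0),
      if_pos (Finset.mem_univ _)]
    have : (σ ^ (t+1)) i = (σ ^ t) (σ i) := by
      rw [pow_succ, Equiv.Perm.mul_apply]
    rw [this]

private lemma perm_pow_one_iff {m : ℕ} (σ : Equiv.Perm (Fin m)) (P : Matrix (Fin m) (Fin m) ℚ)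
    (hP : ∀ i j, P i j = if σ i = j then 1 else 0) (t : ℕ) :
    P ^ t = 1 ↔ σ ^ t = 1 := by
  constructor
  · intro h
    have hfix : ∀ i, (σ ^ t) i = i := by
      intro i
      have := congrFun (congrFun h i) i
      rw [perm_pow_entry σ P hP t i i, Matrix.one_apply_eq] at this
      by_contra hne
      rw [if_neg hne] at this
      norm_num at this
    exact Equiv.ext fun i => by rw [hfix i, Equiv.Perm.one_apply]
  · intro h
    ext i j
    rw [perm_pow_entry σ P hP t i j, h]
    simp [Matrix.one_apply, Equiv.Perm.one_apply]
    split_ifs <;> simp_all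

private lemma perm_size (k m : ℕ) (P : Matrix (Fin m) (Fin m) ℚ)
    (hperm : IsPermMat P) (hord : OrderIs P (2 ^ (k + 1))) : 2 ^ (k + 1) ≤ m := by
  obtain ⟨σ, hσ⟩ := hperm
  obtain ⟨⟨hpos, hone⟩, hleast⟩ := hord
  have horder : orderOf σ = 2 ^ (k + 1) := by
    rw [orderOf_eq_iff hpos]
    constructor
    · exact (perm_pow_one_iff σ P hσ _).mp hone
    · intro s hslt hs0 hcon
      have := hleast ⟨hs0, (perm_pow_one_iff σ P hσ s).mpr hcon⟩
      omega
  have hlcm : σ.cycleType.lcm = 2 ^ (k + 1) := by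
    rw [Equiv.Perm.lcm_cycleType, horder]
  have hex : ∃ a ∈ σ.cycleType, a = 2 ^ (k + 1) := by
    by_contra hno
    push_neg at hno
    have hdvd : σ.cycleType.lcm ∣ 2 ^ k := by
      rw [Multiset.lcm_dvd]
      intro a ha
      have h1 : a ∣ 2 ^ (k + 1) := by
        have := Multiset.dvd_lcm ha
        rwa [hlcm] at this
      obtain ⟨j, hj, rfl⟩ := (Nat.dvd_prime_pow Nat.prime_two).mp h1
      have hjk : j ≠ k + 1 := fun hcon => hno _ ha (by rw [hcon])
      exact pow_dvd_pow 2 (by omega)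
    rw [hlcm] at hdvd
    have := Nat.le_of_dvd (by positivity) hdvd
    have h2 : 2 ^ k < 2 ^ (k + 1) := Nat.pow_lt_pow_right (by norm_num) (by omega)
    omega
  obtain ⟨a, ha, rfl⟩ := hex
  calc 2 ^ (k+1) ≤ σ.support.card := Equiv.Perm.le_card_support_of_mem_cycleType ha
    _ ≤ Finset.univ.card := Finset.card_le_univ _
    _ = m := by simp
private lemma finsym17 (p : ℕ) (i : Fin (p+1)) :
    finSumFinEquiv.symm i
      = if h : (i : ℕ) < p then Sum.inl (⟨i, h⟩ : Fin p) else Sum.inr (0 : Fin 1) := by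
  split_ifs with h
  · rw [Equiv.symm_apply_eq, finSumFinEquiv_apply_left]
    ext
    simp
  · rw [Equiv.symm_apply_eq, finSumFinEquiv_apply_right]
    ext
    simp only [Fin.natAdd]
    have := i.isLt
    omega

set_option maxHeartbeats 1600000 in
private lemma bridge17 (q : ℕ) (hq : 2 ≤ q) :
    dsum (Ccyc (q+1)) (Ccyc 1) + Tblock ((q+1)+1) 2 (q+2) (q+1) (q+1) = Amat q := by
  ext i j
  have hi2 := i.isLt
  have hj2 := j.isLt
  rw [Matrix.add_apply]
  have hd : dsum (Ccyc (q+1)) (Ccyc 1) i j =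
      if (i : ℕ) < q + 1 ∧ (j : ℕ) < q + 1 then
        (if (i : ℕ) = ((j : ℕ) + 1) % (q + 1) then 1 else 0)
      else if (i : ℕ) = q + 1 ∧ (j : ℕ) = q + 1 then 1 else 0 := by
    unfold dsum
    rw [Matrix.reindex_apply, Matrix.submatrix_apply, finsym17, finsym17]
    rcases Nat.lt_or_ge (i : ℕ) (q+1) with h1 | h1 <;>
      rcases Nat.lt_or_ge (j : ℕ) (q+1) with h2 | h2
    · rw [dif_pos h1, dif_pos h2, Matrix.fromBlocks_apply₁₁, if_pos ⟨h1, h2⟩]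
      simp [Ccyc]
    · rw [dif_pos h1, dif_neg (not_lt.mpr h2), Matrix.fromBlocks_apply₁₂,
        if_neg (by omega), if_neg (by omega)]
      simp
    · rw [dif_neg (not_lt.mpr h1), dif_pos h2, Matrix.fromBlocks_apply₂₁,
        if_neg (by omega), if_neg (by omega)]
      simp
    · rw [dif_neg (not_lt.mpr h1), dif_neg (not_lt.mpr h2), Matrix.fromBlocks_apply₂₂,
        if_neg (by omega), if_pos ⟨by omega, by omega⟩]
      simp [Ccyc]
  rw [hd]
  simp only [Tblock, Amat, Matrix.of_apply]
  rcases Nat.lt_trichotomy (j : ℕ) q with hj | hj | hj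
  · rw [Nat.mod_eq_of_lt (show (j : ℕ) + 1 < q + 1 by omega)]
    have c1 : (j : ℕ) < q + 1 := by omega
    have c2 : ¬((j : ℕ) + 1 = q + 2) := by omega
    have c3 : ¬((j : ℕ) + 1 = q + 1) := by omega
    have c4 : (j : ℕ) < q := hj
    simp only [c1, c2, c3, c4, and_true, true_and, and_false, false_and, if_true, if_false,
      ite_true, ite_false]
    split_ifs <;> (try norm_num) <;> omega
  · rw [hj, Nat.mod_self]
    have c1 : (q : ℕ) < q + 1 := by omega
    have c2 : ¬(q + 1 = q + 2) := by omega
    have c3 : ¬(q < q) := lt_irrefl q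
    simp only [c1, c2, c3, eq_self_iff_true, and_true, true_and, and_false, false_and,
      if_true, if_false, ite_true, ite_false]
    split_ifs <;> (try norm_num) <;> omega
  · have hj' : (j : ℕ) = q + 1 := by omega
    rw [hj']
    have c1 : ¬(q + 1 < q + 1) := by omega
    have c2 : ¬(q + 2 = q + 1) := by omega
    have c3 : ¬(q + 1 < q) := by omega
    have c4 : ¬(q + 1 = q) := by omega
    simp only [c1, c2, c3, c4, eq_self_iff_true, and_true, true_and, and_false, false_and,
      if_true, if_false, ite_true, ite_false]
    split_ifs <;> (try norm_num) <;> omega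

theorem stmt17 (k : ℕ) (hk : 1 ≤ k) (n p : ℕ) (hn : n = 2 ^ k + 2) (hp : p = 2 ^ k + 1)
    (A : Matrix (Fin (p + 1)) (Fin (p + 1)) ℚ)
    (hA : A = dsum (Ccyc p) (Ccyc 1) + Tblock (p + 1) 2 n p p) :
    OrderIs A (2 ^ (k + 1)) ∧
      ∀ (m : ℕ) (P : Matrix (Fin m) (Fin m) ℚ),
        IsPermMat P → OrderIs P (2 ^ (k + 1)) → 2 ^ (k + 1) ≤ m := by
  subst hn hp hA
  have hq : 2 ≤ 2 ^ k := by
    have h1 : 2 ^ 1 ≤ 2 ^ k := Nat.pow_le_pow_right (by norm_num) hk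
    simpa using h1
  rw [bridge17 (2 ^ k) hq]
  have h2k : 2 ^ (k + 1) = 2 * 2 ^ k := by ring
  constructor
  · constructor
    · refine ⟨by positivity, ?_⟩
      rw [h2k]
      exact Amat_pow_eq_one (2 ^ k) hq
    · rintro s ⟨hs0, hs1⟩
      rw [h2k]
      exact Amat_min (2 ^ k) hq s hs0 hs1
  · intro m P h1 h2
    exact perm_size k m P h1 h2
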